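/- Let P and Q be probability measures on a measurable space, let a ≠ b be real numbers, and let û be a measurable real-valued function of the observation. Then max{E_P[(û − a)²], E_Q[(û − b)²]} ≥ ((a−b)²/8)·(1 − TV(P,Q)), where TV(P,Q) = sup_A |P(A) − Q(A)|. -/

import Mathlib

open MeasureTheory

/-- Total variation distance `sup_A |P(A) − Q(A)|` over measurable sets. -/
noncomputable def tvDist {α : Type*} [MeasurableSpace α] (P Q : Measure α) : ℝ :=
  ⨆ A : {s : Set α // MeasurableSet s}, |(P A.1).toReal - (Q A.1).toReal|

/-- two-point lower bound via total variation: for probability measures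
`P, Q`, reals `a ≠ b`, and a measurable estimator `û`,
`max{E_P[(û−a)²], E_Q[(û−b)²]} ≥ ((a−b)²/8)(1 − TV(P,Q))`. -/
theorem two_point_lower_bound
    {α : Type*} [MeasurableSpace α] (P Q : Measure α)
    [IsProbabilityMeasure P] [IsProbabilityMeasure Q]
    (a b : ℝ) (hab : a ≠ b)
    (uhat : α → ℝ) (hmeas : Measurable uhat)
    (hIntP : Integrable (fun x => (uhat x - a) ^ 2) P)
    (hIntQ : Integrable (fun x => (uhat x - b) ^ 2) Q) :
    ((a - b) ^ 2 / 8) * (1 - tvDist P Q)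
      ≤ max (∫ x, (uhat x - a) ^ 2 ∂P) (∫ x, (uhat x - b) ^ 2 ∂Q) := by
  set c : ℝ := |a - b| / 2 with hc
  have hcpos : 0 < c := by
    have : a - b ≠ 0 := sub_ne_zero.mpr hab
    positivity
  set A : Set α := {x | |uhat x - a| ≤ |uhat x - b|} with hA
  have hAmeas : MeasurableSet A := by
    apply measurableSet_le
    · exact (hmeas.sub measurable_const).abs
    · exact (hmeas.sub measurable_const).abs
  -- pointwise bounds
  have hP_pt : ∀ x ∈ Aᶜ, c ^ 2 ≤ (uhat x - a) ^ 2 := by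
    intro x hx
    have hx' : |uhat x - b| < |uhat x - a| := by
      simp only [hA, Set.mem_compl_iff, Set.mem_setOf_eq, not_le] at hx
      exact hx
    have habs : |a - b| ≤ |uhat x - a| + |uhat x - b| := by
      have := abs_sub (uhat x - a) (uhat x - b)
      calc |a - b| = |(uhat x - b) - (uhat x - a)| := by ring_nf
        _ ≤ |uhat x - b| + |uhat x - a| := abs_sub _ _
        _ = |uhat x - a| + |uhat x - b| := by ring
    have h2 : |a - b| ≤ 2 * |uhat x - a| := by nlinarith
    have hc2 : c ≤ |uhat x - a| := by rw [hc]; linarith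
    calc c ^ 2 ≤ |uhat x - a| ^ 2 := by nlinarith [abs_nonneg (uhat x - a)]
      _ = (uhat x - a) ^ 2 := sq_abs _
  have hQ_pt : ∀ x ∈ A, c ^ 2 ≤ (uhat x - b) ^ 2 := by
    intro x hx
    have hx' : |uhat x - a| ≤ |uhat x - b| := hx
    have habs : |a - b| ≤ |uhat x - a| + |uhat x - b| := by
      calc |a - b| = |(uhat x - b) - (uhat x - a)| := by ring_nf
        _ ≤ |uhat x - b| + |uhat x - a| := abs_sub _ _
        _ = |uhat x - a| + |uhat x - b| := by ring
    have hc2 : c ≤ |uhat x - b| := by rw [hc]; linarith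
    calc c ^ 2 ≤ |uhat x - b| ^ 2 := by nlinarith [abs_nonneg (uhat x - b)]
      _ = (uhat x - b) ^ 2 := sq_abs _
  -- integral lower bounds
  have hIP : c ^ 2 * (P Aᶜ).toReal ≤ ∫ x, (uhat x - a) ^ 2 ∂P := by
    calc c ^ 2 * (P Aᶜ).toReal ≤ ∫ x in Aᶜ, (uhat x - a) ^ 2 ∂P :=
          setIntegral_ge_of_const_le_real hAmeas.compl (measure_ne_top _ _) hP_pt
            hIntP.integrableOn
      _ ≤ ∫ x, (uhat x - a) ^ 2 ∂P :=
          setIntegral_le_integral hIntP (Filter.Eventually.of_forall fun x => sq_nonneg _)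
  have hIQ : c ^ 2 * (Q A).toReal ≤ ∫ x, (uhat x - b) ^ 2 ∂Q := by
    calc c ^ 2 * (Q A).toReal ≤ ∫ x in A, (uhat x - b) ^ 2 ∂Q :=
          setIntegral_ge_of_const_le_real hAmeas (measure_ne_top _ _) hQ_pt hIntQ.integrableOn
      _ ≤ ∫ x, (uhat x - b) ^ 2 ∂Q :=
          setIntegral_le_integral hIntQ (Filter.Eventually.of_forall fun x => sq_nonneg _)
  have hPcompl : (P Aᶜ).toReal = 1 - (P A).toReal := by
    have := prob_compl_eq_one_sub (μ := P) hAmeas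
    rw [this]
    rw [ENNReal.toReal_sub_of_le (prob_le_one) (by simp)]
    simp
  -- TV bound
  have hTV : |(P A).toReal - (Q A).toReal| ≤ tvDist P Q := by
    have hbdd : BddAbove (Set.range fun s : {s : Set α // MeasurableSet s} =>
        |(P s.1).toReal - (Q s.1).toReal|) := by
      refine ⟨1, ?_⟩
      rintro _ ⟨s, rfl⟩
      have h1 : (P s.1).toReal ≤ 1 := by
        simpa using ENNReal.toReal_mono (by simp) (prob_le_one (μ := P) (s := s.1))
      have h2 : (Q s.1).toReal ≤ 1 := by
        simpa using ENNReal.toReal_mono (by simp) (prob_le_one (μ := Q) (s := s.1))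
      have h3 : 0 ≤ (P s.1).toReal := ENNReal.toReal_nonneg
      have h4 : 0 ≤ (Q s.1).toReal := ENNReal.toReal_nonneg
      rw [abs_sub_le_iff]; constructor <;> linarith
    exact le_ciSup hbdd (⟨A, hAmeas⟩ : {s : Set α // MeasurableSet s})
  have hsum : 1 - tvDist P Q ≤ (P Aᶜ).toReal + (Q A).toReal := by
    rw [hPcompl]
    have := abs_le.mp (le_refl |(P A).toReal - (Q A).toReal|) |>.1
    have h5 : (P A).toReal - (Q A).toReal ≤ |(P A).toReal - (Q A).toReal| := le_abs_self _
    linarith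
  have hmaxP : ∫ x, (uhat x - a) ^ 2 ∂P ≤ max (∫ x, (uhat x - a) ^ 2 ∂P) (∫ x, (uhat x - b) ^ 2 ∂Q) := le_max_left _ _
  have hmaxQ : ∫ x, (uhat x - b) ^ 2 ∂Q ≤ max (∫ x, (uhat x - a) ^ 2 ∂P) (∫ x, (uhat x - b) ^ 2 ∂Q) := le_max_right _ _
  have hc2eq : c ^ 2 = (a - b) ^ 2 / 4 := by
    rw [hc, div_pow, sq_abs]; norm_num
  have hprod := mul_le_mul_of_nonneg_left hsum (by positivity : (0:ℝ) ≤ c ^ 2 / 2)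
  rw [show (a - b) ^ 2 / 8 = c ^ 2 / 2 by rw [hc2eq]; ring]
  nlinarith [hprod, hIP, hIQ, hmaxP, hmaxQ]
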